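/- Let g be the formal power series over ℚ with g = X + X³ + 2X⁵ + 4X⁷ + 5X⁹ + 6X¹¹ + 7X¹³ + (higher order terms), i.e. coefficients c₀=0, c₁=1, c₂=0, c₃=1, c₄=0, c₅=2, c₆=0, c₇=4, c₈=0, c₉=5, c₁₀=0, c₁₁=6 (higher coefficients arbitrary). Then there exists a unique formal power series t over ℚ with constant coefficient 0 and coefficient of X equal to 1 such that g(t(X)) ≡ X modulo X¹², and this t satisfies: coefficient of X³ in t is −1, coefficient of X⁵ is 1, coefficients of X²ᵏ are 0 for 1 ≤ k ≤ 5, coefficients of X⁷ and X⁹ are 0, and the coefficient of X¹¹ in t is −19. -/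

import Mathlib

open PowerSeries

set_option maxHeartbeats 3000000

/-- Composition `g ∘ h` of formal power series (intended for `h` with zero
constant coefficient): the `n`-th coefficient is the `n`-th coefficient of the
evaluation at `h` of the truncation of `g` in degrees `≤ n`. -/
noncomputable def PowerSeries.compose (g h : PowerSeries ℚ) : PowerSeries ℚ :=
  PowerSeries.mk fun n =>
    PowerSeries.coeff n (Polynomial.aeval h (PowerSeries.trunc (n + 1) g))

private lemma myComposeCoeff (g h : PowerSeries ℚ) (n : ℕ) :
    coeff n (PowerSeries.compose g h) =
      ∑ i ∈ Finset.range (n + 1), coeff i g * coeff n (h ^ i) := by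
  rw [PowerSeries.compose, coeff_mk,
    Polynomial.aeval_eq_sum_range' (natDegree_trunc_lt g n) h, map_sum]
  refine Finset.sum_congr rfl fun i hi => ?_
  rw [map_smul, smul_eq_mul, PowerSeries.coeff_trunc, if_pos (Finset.mem_range.mp hi)]

private lemma myOrd {a : PowerSeries ℚ} (ha : constantCoeff a = 0)
    {n k : ℕ} (h : n < k) : coeff n (a ^ k) = 0 :=
  PowerSeries.X_pow_dvd_iff.mp (pow_dvd_pow_of_dvd (PowerSeries.X_dvd_iff.mpr ha) k) n h

private lemma myHigh (r : PowerSeries ℚ) {n : ℕ} (hn : n < 12) :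
    coeff n ((X : PowerSeries ℚ) ^ 12 * r) = 0 :=
  PowerSeries.X_pow_dvd_iff.mp (dvd_mul_right _ _) n hn

private lemma myPowCongr {a b : PowerSeries ℚ} (ha : constantCoeff a = 0)
    (hb : constantCoeff b = 0) {n : ℕ}
    (hab : ∀ m < n, coeff m a = coeff m b) :
    ∀ k, 1 ≤ k → ∀ m ≤ n, (m < n ∨ 2 ≤ k) → coeff m (a ^ k) = coeff m (b ^ k) := by
  intro k
  induction k with
  | zero => omega
  | succ k ih =>
    intro _ m hm hcase
    rcases Nat.eq_zero_or_pos k with rfl | hk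
    · simp only [zero_add, pow_one]
      rcases hcase with h | h
      · exact hab m h
      · omega
    · rw [pow_succ, pow_succ, PowerSeries.coeff_mul, PowerSeries.coeff_mul]
      refine Finset.sum_congr rfl fun p hp => ?_
      have hpm : p.1 + p.2 = m := Finset.HasAntidiagonal.mem_antidiagonal.mp hp
      by_cases hi0 : p.1 = 0
      · have h1 : coeff p.1 (a ^ k) = 0 := by
          rw [hi0, coeff_zero_eq_constantCoeff, map_pow, ha, zero_pow (by omega)]
        have h2 : coeff p.1 (b ^ k) = 0 := by
          rw [hi0, coeff_zero_eq_constantCoeff, map_pow, hb, zero_pow (by omega)]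
        rw [h1, h2, zero_mul, zero_mul]
      · by_cases hj0 : p.2 = 0
        · have h1 : coeff p.2 a = 0 := by
            rw [hj0, coeff_zero_eq_constantCoeff]; exact ha
          have h2 : coeff p.2 b = 0 := by
            rw [hj0, coeff_zero_eq_constantCoeff]; exact hb
          rw [h1, h2, mul_zero, mul_zero]
        · have hiLt : p.1 < n := by omega
          have hjLt : p.2 < n := by omega
          rw [ih hk p.1 (by omega) (Or.inl hiLt), hab p.2 hjLt]

@[simp] private lemma myC3 : (3 : PowerSeries ℚ) = C 3 := (map_ofNat _ _).symm
@[simp] private lemma myC5 : (5 : PowerSeries ℚ) = C 5 := (map_ofNat _ _).symm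
@[simp] private lemma myC6 : (6 : PowerSeries ℚ) = C 6 := (map_ofNat _ _).symm
@[simp] private lemma myC7 : (7 : PowerSeries ℚ) = C 7 := (map_ofNat _ _).symm
@[simp] private lemma myC9 : (9 : PowerSeries ℚ) = C 9 := (map_ofNat _ _).symm
@[simp] private lemma myC15 : (15 : PowerSeries ℚ) = C 15 := (map_ofNat _ _).symm
@[simp] private lemma myC19 : (19 : PowerSeries ℚ) = C 19 := (map_ofNat _ _).symm
@[simp] private lemma myC28 : (28 : PowerSeries ℚ) = C 28 := (map_ofNat _ _).symm
@[simp] private lemma myC30 : (30 : PowerSeries ℚ) = C 30 := (map_ofNat _ _).symm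

theorem stmt0 (g : PowerSeries ℚ)
    (h0 : coeff 0 g = 0) (h1 : coeff 1 g = 1) (h2 : coeff 2 g = 0)
    (h3 : coeff 3 g = 1) (h4 : coeff 4 g = 0) (h5 : coeff 5 g = 2)
    (h6 : coeff 6 g = 0) (h7 : coeff 7 g = 4) (h8 : coeff 8 g = 0)
    (h9 : coeff 9 g = 5) (h10 : coeff 10 g = 0) (h11 : coeff 11 g = 6) :
    ∃ t : PowerSeries ℚ,
      (constantCoeff t = 0 ∧ coeff 1 t = 1 ∧
        ∀ n < 12, coeff n (PowerSeries.compose g t) = coeff n (X : PowerSeries ℚ)) ∧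
      (coeff 3 t = -1 ∧ coeff 5 t = 1 ∧
        (∀ k, 1 ≤ k → k ≤ 5 → coeff (2 * k) t = 0) ∧
        coeff 7 t = 0 ∧ coeff 9 t = 0 ∧ coeff 11 t = -19) ∧
      (∀ t' : PowerSeries ℚ,
        (constantCoeff t' = 0 ∧ coeff 1 t' = 1 ∧
          ∀ n < 12, coeff n (PowerSeries.compose g t') = coeff n (X : PowerSeries ℚ)) →
        ∀ n < 12, coeff n t' = coeff n t) := by
  classical
  set t : PowerSeries ℚ := X - X ^ 3 + X ^ 5 - 19 * X ^ 11 with ht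
  have hp3 : t ^ 3 = (X ^ 3 - 3 * X ^ 5 + 6 * X ^ 7 - 7 * X ^ 9 + 6 * X ^ 11) + X ^ 12 * (-60 * X + 115 * X ^ 3 - 171 * X ^ 5 + 114 * X ^ 7 - 57 * X ^ 9 + 1083 * X ^ 11 - 1083 * X ^ 13 + 1083 * X ^ 15 - 6859 * X ^ 21) := by
    rw [ht]; ring
  have hp5 : t ^ 5 = (X ^ 5 - 5 * X ^ 7 + 15 * X ^ 9 - 30 * X ^ 11) + X ^ 12 * (45 * X - 146 * X ^ 3 + 425 * X ^ 5 - 980 * X ^ 7 + 1535 * X ^ 9 - 1810 * X ^ 11 + 5131 * X ^ 13 - 11780 * X ^ 15 + 22040 * X ^ 17 - 25365 * X ^ 19 + 21660 * X ^ 21 - 79420 * X ^ 23 + 140790 * X ^ 25 - 205770 * X ^ 27 + 137180 * X ^ 29 - 68590 * X ^ 31 + 651605 * X ^ 33 - 651605 * X ^ 35 + 651605 * X ^ 37 - 2476099 * X ^ 43) := by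
    rw [ht]; ring
  have hp7 : t ^ 7 = (X ^ 7 - 7 * X ^ 9 + 28 * X ^ 11) + X ^ 12 * (-77 * X + 161 * X ^ 3 - 399 * X ^ 5 + 1155 * X ^ 7 - 3186 * X ^ 9 + 7007 * X ^ 11 - 12236 * X ^ 13 + 24500 * X ^ 15 - 56735 * X ^ 17 + 130501 * X ^ 19 - 239407 * X ^ 21 + 347796 * X ^ 23 - 629489 * X ^ 25 + 1302203 * X ^ 27 - 2628213 * X ^ 29 + 3954755 * X ^ 31 - 4599140 * X ^ 33 + 8409856 * X ^ 35 - 16084355 * X ^ 37 + 28327670 * X ^ 39 - 32168710 * X ^ 41 + 27367410 * X ^ 43 - 65681784 * X ^ 45 + 108557393 * X ^ 47 - 155994237 * X ^ 49 + 103996158 * X ^ 51 - 51998079 * X ^ 53 + 329321167 * X ^ 55 - 329321167 * X ^ 57 + 329321167 * X ^ 59 - 893871739 * X ^ 65) := by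
    rw [ht]; ring
  have hp9 : t ^ 9 = (X ^ 9 - 9 * X ^ 11) + X ^ 12 * (45 * X - 156 * X ^ 3 + 414 * X ^ 5 - 1053 * X ^ 7 + 2922 * X ^ 9 - 8460 * X ^ 11 + 22059 * X ^ 13 - 48625 * X ^ 15 + 102087 * X ^ 17 - 227340 * X ^ 19 + 539178 * X ^ 21 - 1190871 * X ^ 23 + 2266506 * X ^ 25 - 4167312 * X ^ 27 + 8182737 * X ^ 29 - 17252199 * X ^ 31 + 33466525 * X ^ 33 - 55317132 * X ^ 35 + 91109826 * X ^ 37 - 164341089 * X ^ 39 + 319266234 * X ^ 41 - 544558392 * X ^ 43 + 767740866 * X ^ 45 - 1161530496 * X ^ 47 + 1990330902 * X ^ 49 - 3613074276 * X ^ 51 + 5238122274 * X ^ 53 - 6009883236 * X ^ 55 + 8960090034 * X ^ 57 - 14975446752 * X ^ 59 + 24959077920 * X ^ 61 - 27974966502 * X ^ 63 + 23711124024 * X ^ 65 - 44034944616 * X ^ 67 + 68310619212 * X ^ 69 - 96538147812 * X ^ 71 + 64358765208 * X ^ 73 - 32179382604 * X ^ 75 + 152852067369 * X ^ 77 - 152852067369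 * X ^ 79 + 152852067369 * X ^ 81 - 322687697779 * X ^ 87) := by
    rw [ht]; ring
  have hp11 : t ^ 11 = (X ^ 11) + X ^ 12 * (-11 * X + 66 * X ^ 3 - 275 * X ^ 5 + 880 * X ^ 7 - 2486 * X ^ 9 + 7007 * X ^ 11 - 20537 * X ^ 13 + 58245 * X ^ 15 - 148390 * X ^ 17 + 347391 * X ^ 19 - 799998 * X ^ 21 + 1908203 * X ^ 23 - 4531120 * X ^ 25 + 9979475 * X ^ 27 - 20524064 * X ^ 29 + 41658617 * X ^ 31 - 87904542 * X ^ 33 + 185464345 * X ^ 35 - 363962280 * X ^ 37 + 671422389 * X ^ 39 - 1234196216 * X ^ 41 + 2384907361 * X ^ 43 - 4581810860 * X ^ 45 + 8082019550 * X ^ 47 - 13473912947 * X ^ 49 + 22788151353 * X ^ 51 - 41225663193 * X ^ 53 + 72677778085 * X ^ 55 - 114436516260 * X ^ 57 + 172806880620 * X ^ 59 - 273286614513 * X ^ 61 + 471370796358 * X ^ 63 - 755313148590 * X ^ 65 + 1035324758820 * X ^ 67 - 1427495834490 * X ^ 69 + 2164858307898 * X ^ 71 - 3602976607098 * X ^ 73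 + 5045670737250 * X ^ 75 - 5713251788640 * X ^ 77 + 7543665880707 * X ^ 79 - 11356640443995 * X ^ 81 + 17993638106070 * X ^ 83 - 19910992986225 * X ^ 85 + 16813727410590 * X ^ 87 - 26154687083140 * X ^ 89 + 38297934657455 * X ^ 91 - 53243470133535 * X ^ 93 + 35495646755690 * X ^ 95 - 17747823377845 * X ^ 97 + 67441728835811 * X ^ 99 - 67441728835811 * X ^ 101 + 67441728835811 * X ^ 103 - 116490258898219 * X ^ 109) := by
    rw [ht]; ring
  have hcc : constantCoeff t = 0 := by
    rw [← coeff_zero_eq_constantCoeff]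
    simp [ht, coeff_C_mul, coeff_X_pow, coeff_X]
  have hc1 : coeff 1 t = 1 := by
    simp [ht, coeff_C_mul, coeff_X_pow, coeff_X]
  have hc3 : coeff 3 t = -1 := by
    simp [ht, coeff_C_mul, coeff_X_pow, coeff_X]
  have hc5 : coeff 5 t = 1 := by
    simp [ht, coeff_C_mul, coeff_X_pow, coeff_X]
  have hc7 : coeff 7 t = 0 := by
    simp [ht, coeff_C_mul, coeff_X_pow, coeff_X]
  have hc9 : coeff 9 t = 0 := by
    simp [ht, coeff_C_mul, coeff_X_pow, coeff_X]
  have hc11 : coeff 11 t = -19 := by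
    simp [ht, coeff_C_mul, coeff_X_pow, coeff_X]
  have hev : ∀ k, 1 ≤ k → k ≤ 5 → coeff (2 * k) t = 0 := by
    intro k hk1 hk5
    interval_cases k <;> simp [ht, coeff_C_mul, coeff_X_pow, coeff_X]
  have hkey : ∀ n < 12, coeff n (PowerSeries.compose g t) = coeff n (X : PowerSeries ℚ) := by
    intro n hn
    rw [myComposeCoeff]
    have hsub : ∑ i ∈ Finset.range (n + 1), coeff i g * coeff n (t ^ i)
        = ∑ i ∈ Finset.range 12, coeff i g * coeff n (t ^ i) := by
      refine Finset.sum_subset (Finset.range_subset_range.mpr (by omega)) fun i hi hni => ?_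
      rw [myOrd hcc (by simp only [Finset.mem_range] at hi hni ⊢; omega), mul_zero]
    rw [hsub]
    simp only [Finset.sum_range_succ, Finset.sum_range_zero, h0, h1, h2, h3, h4, h5, h6, h7,
      h8, h9, h10, h11, zero_mul, one_mul, zero_add, add_zero]
    rw [hp3, hp5, hp7, hp9, hp11]
    simp only [map_add, show ∀ r : PowerSeries ℚ, coeff n (X ^ 12 * r) = 0 from
      fun r => myHigh r hn, add_zero]
    rw [ht]
    interval_cases n <;>
      simp [coeff_C_mul, coeff_X_pow, coeff_X, map_sub, map_add] <;> norm_num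
  have huniq : ∀ t' : PowerSeries ℚ, constantCoeff t' = 0 →
      (∀ n < 12, coeff n (PowerSeries.compose g t') = coeff n (X : PowerSeries ℚ)) →
      ∀ n < 12, coeff n t' = coeff n t := by
    intro t' h'0 h'c n
    induction n using Nat.strong_induction_on with
    | _ n ih =>
      intro hn
      rcases Nat.eq_zero_or_pos n with rfl | hpos
      · rw [coeff_zero_eq_constantCoeff, h'0, hcc]
      · have hagree : ∀ m < n, coeff m t' = coeff m t := fun m hm => ih m hm (by omega)
        have e : coeff n (PowerSeries.compose g t') = coeff n (PowerSeries.compose g t) :=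
          (h'c n hn).trans (hkey n hn).symm
        rw [myComposeCoeff, myComposeCoeff] at e
        have h1mem : (1 : ℕ) ∈ Finset.range (n + 1) := Finset.mem_range.mpr (by omega)
        rw [← Finset.add_sum_erase _ _ h1mem, ← Finset.add_sum_erase _ _ h1mem] at e
        have hrest : ∑ i ∈ (Finset.range (n + 1)).erase 1, coeff i g * coeff n (t' ^ i)
            = ∑ i ∈ (Finset.range (n + 1)).erase 1, coeff i g * coeff n (t ^ i) := by
          refine Finset.sum_congr rfl fun i hi => ?_
          have hi1 : i ≠ 1 := (Finset.mem_erase.mp hi).1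
          rcases Nat.eq_zero_or_pos i with rfl | hip
          · simp only [pow_zero]
          · rw [myPowCongr h'0 hcc hagree i (by omega) n le_rfl (Or.inr (by omega))]
        rw [hrest] at e
        have e2 := add_right_cancel e
        rwa [h1, one_mul, one_mul, pow_one, pow_one] at e2
  exact ⟨t, ⟨hcc, hc1, hkey⟩, ⟨hc3, hc5, hev, hc7, hc9, hc11⟩,
    fun t' h' => huniq t' h'.1 h'.2.2⟩
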